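/- (MPCC can fail to have a solution while the bilevel problem does.) Consider the system in variables (x, y₁, y₂, μ₁, μ₂): x ≥ 0, 1 + 2(μ₁ + μ₂) y₁ = 0, μ₂ − μ₁ = 0, μ₁ (y₁² − y₂ − x) = 0, μ₂ (y₁² + y₂) = 0, y₁² − y₂ − x ≤ 0, y₁² + y₂ ≤ 0, μ₁ ≥ 0, μ₂ ≥ 0 (the MPCC reformulation of the bilevel problem minimizing x subject to x ≥ 0 and y minimizing y₁ over {y : y₁² − y₂ ≤ x, y₁² + y₂ ≤ 0}). Then: (i) no solution of this system has x = 0 (since x = 0 forces y₁ = y₂ = 0, making the stationarity equation 1 + 2(μ₁+μ₂)·0 = 0 infeasible); (ii) for every x > 0 the system has a solution; consequently the infimum of x over the feasible set of the MPCC is 0 but is not attained, so the MPCC has no optimal solution, whereas the bilevel problem has the unique optimal solution x = 0, y = (0,0). -/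
import Mathlib


/-- Feasibility for the MPCC reformulation of Example `BP vs MPCC I`, in variables
`(x, y₁, y₂, μ₁, μ₂)`. -/
def MPCC1Feasible (x y₁ y₂ μ₁ μ₂ : ℝ) : Prop :=
  0 ≤ x ∧
  1 + 2 * (μ₁ + μ₂) * y₁ = 0 ∧
  μ₂ - μ₁ = 0 ∧
  μ₁ * (y₁ ^ 2 - y₂ - x) = 0 ∧
  μ₂ * (y₁ ^ 2 + y₂) = 0 ∧
  y₁ ^ 2 - y₂ - x ≤ 0 ∧
  y₁ ^ 2 + y₂ ≤ 0 ∧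
  0 ≤ μ₁ ∧ 0 ≤ μ₂

/-- Feasibility for the bilevel problem: `x ≥ 0` and `(y₁, y₂)` minimizes `y₁` over
`{(z₁, z₂) : z₁² − z₂ − x ≤ 0, z₁² + z₂ ≤ 0}`. -/
def BP1Feasible (x y₁ y₂ : ℝ) : Prop :=
  0 ≤ x ∧ (y₁ ^ 2 - y₂ - x ≤ 0 ∧ y₁ ^ 2 + y₂ ≤ 0) ∧
  ∀ z₁ z₂ : ℝ, z₁ ^ 2 - z₂ - x ≤ 0 → z₁ ^ 2 + z₂ ≤ 0 → y₁ ≤ z₁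

lemma mpcc_infeasible_zero (y₁ y₂ μ₁ μ₂ : ℝ) : ¬ MPCC1Feasible 0 y₁ y₂ μ₁ μ₂ := by
  rintro ⟨-, h1, -, -, -, h6, h7, -, -⟩
  have hy : y₁ = 0 := by nlinarith
  rw [hy] at h1; norm_num at h1

lemma mpcc_feasible_pos (x : ℝ) (hx : 0 < x) :
    ∃ y₁ y₂ μ₁ μ₂ : ℝ, MPCC1Feasible x y₁ y₂ μ₁ μ₂ := by
  set s := Real.sqrt (x / 2) with hs
  have hs0 : 0 < s := Real.sqrt_pos.mpr (by linarith)
  have hs2 : s ^ 2 = x / 2 := Real.sq_sqrt (by linarith)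
  refine ⟨-s, -(x/2), 1/(4*s), 1/(4*s), hx.le, ?_, by ring, ?_, ?_, ?_, ?_, ?_, ?_⟩
  · field_simp; ring
  · have hh : (-s) ^ 2 - -(x/2) - x = 0 := by nlinarith
    rw [hh, mul_zero]
  · have hh : (-s) ^ 2 + -(x/2) = 0 := by nlinarith
    rw [hh, mul_zero]
  · nlinarith
  · nlinarith
  · positivity
  · positivity

/-- The MPCC reformulation can fail to have a solution while the bilevel problem has a unique
one: (i) no feasible point of the MPCC has `x = 0`; (ii) every `x > 0` is attained by a
feasible point; hence the infimum `0` of `x` over the MPCC feasible region is not attained and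
the MPCC has no optimal solution, while the bilevel problem has the unique optimal solution
`x = 0`, `y = (0, 0)`. -/

theorem MPCC_no_solution_bilevel_unique :
    (∀ y₁ y₂ μ₁ μ₂ : ℝ, ¬ MPCC1Feasible 0 y₁ y₂ μ₁ μ₂) ∧
    (∀ x : ℝ, 0 < x → ∃ y₁ y₂ μ₁ μ₂ : ℝ, MPCC1Feasible x y₁ y₂ μ₁ μ₂) ∧
    IsGLB {x : ℝ | ∃ y₁ y₂ μ₁ μ₂ : ℝ, MPCC1Feasible x y₁ y₂ μ₁ μ₂} 0 ∧
    (0 ∉ {x : ℝ | ∃ y₁ y₂ μ₁ μ₂ : ℝ, MPCC1Feasible x y₁ y₂ μ₁ μ₂}) ∧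
    ¬ (∃ x y₁ y₂ μ₁ μ₂ : ℝ, MPCC1Feasible x y₁ y₂ μ₁ μ₂ ∧
        ∀ x' y₁' y₂' μ₁' μ₂' : ℝ, MPCC1Feasible x' y₁' y₂' μ₁' μ₂' → x ≤ x') ∧
    (BP1Feasible 0 0 0 ∧ ∀ x y₁ y₂ : ℝ, BP1Feasible x y₁ y₂ → 0 ≤ x) ∧
    (∀ x y₁ y₂ : ℝ, BP1Feasible x y₁ y₂ →
      (∀ x' y₁' y₂' : ℝ, BP1Feasible x' y₁' y₂' → x ≤ x') →
      x = 0 ∧ y₁ = 0 ∧ y₂ = 0) := by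

  have hzero := mpcc_infeasible_zero
  have hpos := mpcc_feasible_pos
  have hglb : IsGLB {x : ℝ | ∃ y₁ y₂ μ₁ μ₂ : ℝ, MPCC1Feasible x y₁ y₂ μ₁ μ₂} 0 := by
    constructor
    · rintro x ⟨y₁, y₂, μ₁, μ₂, hf⟩; exact hf.1
    · intro b hb
      by_contra hb0
      push_neg at hb0
      have : b ≤ b / 2 := hb (hpos (b/2) (by linarith))
      linarith
  refine ⟨hzero, hpos, hglb, ?_, ?_, ⟨?_, ?_⟩, ?_⟩
  · rintro ⟨y₁, y₂, μ₁, μ₂, hf⟩; exact hzero y₁ y₂ μ₁ μ₂ hf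
  · rintro ⟨x, y₁, y₂, μ₁, μ₂, hf, hopt⟩
    have hx0 : 0 ≤ x := hf.1
    have hxne : x ≠ 0 := by rintro rfl; exact hzero y₁ y₂ μ₁ μ₂ hf
    have hxp : 0 < x := lt_of_le_of_ne hx0 (Ne.symm hxne)
    obtain ⟨a, b, c, d, hf2⟩ := hpos (x/2) (by linarith)
    have := hopt (x/2) a b c d hf2
    linarith
  · refine ⟨le_refl 0, ⟨by norm_num, by norm_num⟩, ?_⟩
    intro z₁ z₂ h1 h2
    nlinarith
  · intro x y₁ y₂ hf; exact hf.1
  · intro x y₁ y₂ hf hopt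
    have hx0 : x = 0 := le_antisymm (hopt 0 0 0 ⟨le_refl 0, ⟨by norm_num, by norm_num⟩, fun z₁ z₂ h1 h2 => by nlinarith⟩) hf.1
    subst hx0
    obtain ⟨-, ⟨h1, h2⟩, -⟩ := hf
    have hy1 : y₁ = 0 := by nlinarith
    subst hy1
    have : y₂ = 0 := by nlinarith
    exact ⟨rfl, rfl, this⟩
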